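/- Let f ∈ L^p(0,1) be (ρ,γ)-irregular for some p ∈ [1,∞), ρ ∈ (0,1], γ ∈ [0,1), with constant c_f. Then for every q with qρ > 1 and every ε > 0: (1/|J|)·|{x ∈ J : |f(x) − f_J| ≤ ε c_f^{−q} |J|^{q(1−γ)}}| ≲ ε^{1/q} for every interval J ⊆ [0,1], where f_J is the average of f on J. -/

import Mathlib

open MeasureTheory

set_option maxHeartbeats 1000000


/-- The Fejér-type kernel `K(u) = 4(1-cos u)/u²` (with `K(0)=2`). -/
noncomputable def fejerK (u : ℝ) : ℝ := if u = 0 then 2 else 4 * (1 - Real.cos u) / u ^ 2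

lemma fejerK_nonneg (u : ℝ) : 0 ≤ fejerK u := by
  unfold fejerK
  split_ifs with h
  · norm_num
  · have h1 : Real.cos u ≤ 1 := Real.cos_le_one u
    have h2 : (0:ℝ) < u ^ 2 := by positivity
    exact div_nonneg (by linarith) h2.le

lemma fejerK_le_two (u : ℝ) : fejerK u ≤ 2 := by
  unfold fejerK
  split_ifs with h
  · norm_num
  · have h1 : 1 - u ^ 2 / 2 ≤ Real.cos u := Real.one_sub_sq_div_two_le_cos
    have h2 : (0:ℝ) < u ^ 2 := by positivity
    rw [div_le_iff₀ h2]
    linarith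

lemma one_le_fejerK {u : ℝ} (hu : |u| ≤ 1) : 1 ≤ fejerK u := by
  unfold fejerK
  split_ifs with h
  · norm_num
  · have h2 : (0:ℝ) < u ^ 2 := by positivity
    rw [le_div_iff₀ h2, one_mul]
    have habs : Real.cos u = Real.cos |u| := (Real.cos_abs u).symm
    set t := |u| with ht
    have ht0 : 0 < t := abs_pos.mpr h
    have ht1 : t ≤ 1 := hu
    have hsq : Real.sin (t/2) ^ 2 = 1/2 - Real.cos t / 2 := by
      have := Real.sin_sq_eq_half_sub (t/2)
      rwa [show 2 * (t/2) = t by ring] at this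
    have hsin : t/2 - (t/2)^3/4 < Real.sin (t/2) :=
      by
        have h := Real.sin_gt_sub_cube (x := t/2) (by linarith)
        nlinarith [pow_pos (by linarith : (0:ℝ) < t/2) 3]
    have hlow : 15 * t / 32 ≤ t/2 - (t/2)^3/4 := by
      nlinarith [mul_nonneg (by linarith : (0:ℝ) ≤ 1 - t) (sq_nonneg t)]
    have hpos : 0 < 15 * t / 32 := by positivity
    have hs2 : (15 * t / 32) ^ 2 ≤ Real.sin (t/2) ^ 2 := by nlinarith
    have hu2 : u ^ 2 = t ^ 2 := (sq_abs u).symm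
    rw [hu2, habs]
    nlinarith [hsq, hs2]

lemma measurable_fejerK : Measurable fejerK := by
  unfold fejerK
  exact Measurable.ite (measurableSet_eq)
    measurable_const
    (((measurable_const.sub Real.measurable_cos).const_mul 4).div (measurable_id.pow_const 2))

lemma fejer_half (u : ℝ) :
    (∫ ξ in (0:ℝ)..1, 2 * (1 - |ξ|) * Real.cos (u * ξ)) = fejerK u / 2 := by
  have habs : Set.EqOn (fun ξ : ℝ => 2 * (1 - |ξ|) * Real.cos (u * ξ))
      (fun ξ : ℝ => 2 * (1 - ξ) * Real.cos (u * ξ)) (Set.uIcc 0 1) := by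
    intro ξ hξ
    rw [Set.uIcc_of_le (by norm_num : (0:ℝ) ≤ 1)] at hξ
    simp only [abs_of_nonneg hξ.1]
  rw [intervalIntegral.integral_congr habs]
  rcases eq_or_ne u 0 with hu | hu
  · subst hu
    simp only [zero_mul, Real.cos_zero, mul_one, fejerK, if_pos rfl]
    have hG : ∀ ξ ∈ Set.uIcc (0:ℝ) 1,
        HasDerivAt (fun ξ : ℝ => 2 * ξ - ξ ^ 2) (2 * (1 - ξ)) ξ := by
      intro ξ _
      have h1 : HasDerivAt (fun ξ : ℝ => 2 * ξ) 2 ξ := by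
        simpa using (hasDerivAt_id ξ).const_mul (2:ℝ)
      have h2 : HasDerivAt (fun ξ : ℝ => ξ ^ 2) (2 * ξ) ξ := by
        simpa using hasDerivAt_pow 2 ξ
      have := h1.sub h2
      exact this.congr_deriv (by ring)
    rw [intervalIntegral.integral_eq_sub_of_hasDerivAt hG
      ((by continuity : Continuous fun ξ : ℝ => 2 * (1 - ξ)).intervalIntegrable 0 1)]
    norm_num
  · have hG : ∀ ξ ∈ Set.uIcc (0:ℝ) 1,
        HasDerivAt (fun ξ : ℝ => 2 * ((1 - ξ) * Real.sin (u * ξ) / u - Real.cos (u * ξ) / u ^ 2))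
          (2 * (1 - ξ) * Real.cos (u * ξ)) ξ := by
      intro ξ _
      have hid : HasDerivAt (fun x : ℝ => u * x) (u * 1) ξ := (hasDerivAt_id ξ).const_mul u
      have hs : HasDerivAt (fun x : ℝ => Real.sin (u * x)) (Real.cos (u * ξ) * (u * 1)) ξ :=
        (Real.hasDerivAt_sin (u * ξ)).comp ξ hid
      have hcnew : HasDerivAt (fun x : ℝ => Real.cos (u * x)) (-Real.sin (u * ξ) * (u * 1)) ξ :=
        (Real.hasDerivAt_cos (u * ξ)).comp ξ hid
      have h1 : HasDerivAt (fun x : ℝ => (1 - x)) (0 - 1) ξ :=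
        (hasDerivAt_const ξ (1:ℝ)).sub (hasDerivAt_id ξ)
      have := (((h1.mul hs).div_const u).sub (hcnew.div_const (u ^ 2))).const_mul (2:ℝ)
      refine this.congr_deriv ?_
      field_simp
      ring
    rw [intervalIntegral.integral_eq_sub_of_hasDerivAt hG
      ((by continuity : Continuous fun ξ : ℝ => 2 * (1 - ξ) * Real.cos (u * ξ)).intervalIntegrable 0 1)]
    simp only [fejerK, if_neg hu]
    norm_num
    field_simp
    ring

lemma fejer_integral (u : ℝ) :
    ∫ ξ in Set.Ioo (-1:ℝ) 1, 2 * (1 - |ξ|) * Real.cos (u * ξ) = fejerK u := by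
  have hcont : Continuous fun ξ : ℝ => 2 * (1 - |ξ|) * Real.cos (u * ξ) := by continuity
  rw [← MeasureTheory.integral_Ioc_eq_integral_Ioo,
    ← intervalIntegral.integral_of_le (by norm_num : (-1:ℝ) ≤ 1)]
  rw [← intervalIntegral.integral_add_adjacent_intervals
    (hcont.intervalIntegrable (-1) 0) (hcont.intervalIntegrable 0 1)]
  have hneg : (∫ ξ in (-1:ℝ)..0, 2 * (1 - |ξ|) * Real.cos (u * ξ))
      = ∫ ξ in (0:ℝ)..1, 2 * (1 - |ξ|) * Real.cos (u * ξ) := by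
    have h := intervalIntegral.integral_comp_neg (a := (0:ℝ)) (b := 1)
      (fun ξ => 2 * (1 - |ξ|) * Real.cos (u * ξ))
    simp only [mul_neg, Real.cos_neg, abs_neg, neg_zero] at h
    rw [← h]
  rw [hneg, fejer_half]
  ring

lemma absRpow_intInt01 {r : ℝ} (hr : -1 < r) :
    IntervalIntegrable (fun ξ : ℝ => |ξ| ^ r) volume 0 1 := by
  refine (intervalIntegral.intervalIntegrable_rpow' (a := 0) (b := 1) hr).congr ?_
  have : Set.uIoc (0:ℝ) 1 = Set.Ioc 0 1 := Set.uIoc_of_le (by norm_num)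
  rw [this]
  intro ξ hξ
  show ξ ^ r = |ξ| ^ r
  rw [abs_of_pos hξ.1]

lemma absRpow_intIntNeg {r : ℝ} (hr : -1 < r) :
    IntervalIntegrable (fun ξ : ℝ => |ξ| ^ r) volume (-1) 0 := by
  have := (IntervalIntegrable.iff_comp_neg (f := fun ξ : ℝ => |ξ| ^ r)).mp (absRpow_intInt01 hr)
  simp only [abs_neg, neg_zero] at this
  exact this.symm

lemma absRpow_intInt {r : ℝ} (hr : -1 < r) :
    IntervalIntegrable (fun ξ : ℝ => |ξ| ^ r) volume (-1) 1 :=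
  (absRpow_intIntNeg hr).trans (absRpow_intInt01 hr)

lemma absRpow_integral {r : ℝ} (hr : -1 < r) :
    ∫ ξ in (-1:ℝ)..1, |ξ| ^ r = 2 / (r + 1) := by
  have h01 : (∫ ξ in (0:ℝ)..1, |ξ| ^ r) = 1 / (r + 1) := by
    have habs : Set.EqOn (fun ξ : ℝ => |ξ| ^ r) (fun ξ : ℝ => ξ ^ r) (Set.uIcc 0 1) := by
      intro ξ hξ
      rw [Set.uIcc_of_le (by norm_num : (0:ℝ) ≤ 1)] at hξ
      simp only [abs_of_nonneg hξ.1]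
    rw [intervalIntegral.integral_congr habs, integral_rpow (Or.inl hr),
      Real.one_rpow, Real.zero_rpow (by linarith)]
    ring
  have hneg : (∫ ξ in (-1:ℝ)..0, |ξ| ^ r) = ∫ ξ in (0:ℝ)..1, |ξ| ^ r := by
    have h := intervalIntegral.integral_comp_neg (a := (0:ℝ)) (b := 1)
      (fun ξ : ℝ => |ξ| ^ r)
    simp only [abs_neg, neg_zero] at h
    rw [← h]
  rw [← intervalIntegral.integral_add_adjacent_intervals
      (absRpow_intIntNeg hr) (absRpow_intInt01 hr), hneg, h01]
  ring

lemma cos_integral_le_abs (J : Set ℝ) (hfin : volume J < ⊤)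
    (f : ℝ → ℝ) (hfm : AEStronglyMeasurable f (volume.restrict J)) (s m : ℝ) :
    (∫ x in J, Real.cos (s * (f x - m))) ≤
      ‖∫ x in J, Complex.exp (Complex.I * s * f x)‖ := by
  haveI : Fact (volume J < ⊤) := ⟨hfin⟩
  have hmeas : AEStronglyMeasurable (fun x => Complex.exp (Complex.I * s * f x))
      (volume.restrict J) := by
    refine Complex.continuous_exp.comp_aestronglyMeasurable ?_
    exact (Complex.continuous_ofReal.comp_aestronglyMeasurable hfm).const_mul (Complex.I * s)
  have hre : ∀ x : ℝ, (Complex.I * (s:ℂ) * (x:ℂ)).re = 0 := by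
    intro x
    simp [Complex.mul_re, Complex.mul_im]
  have hint : Integrable (fun x => Complex.exp (Complex.I * s * f x)) (volume.restrict J) := by
    refine Integrable.mono' (integrable_const 1) hmeas
      (Filter.Eventually.of_forall fun x => ?_)
    rw [Complex.norm_exp, hre]
    norm_num
  have key : (∫ x in J, Real.cos (s * (f x - m))) =
      (Complex.exp (-(Complex.I * s * m)) * ∫ x in J, Complex.exp (Complex.I * s * f x)).re := by
    rw [← integral_const_mul]
    simp only [← RCLike.re_to_complex]
    rw [← integral_re (hint.const_mul _)]
    refine integral_congr_ae (Filter.Eventually.of_forall fun x => ?_)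
    have h1 : Complex.exp (-(Complex.I * s * m)) * Complex.exp (Complex.I * s * f x)
        = Complex.exp ((s * (f x - m) : ℝ) * Complex.I) := by
      rw [← Complex.exp_add]
      congr 1
      push_cast
      ring
    simp only []
    rw [RCLike.re_to_complex, h1, Complex.exp_ofReal_mul_I_re]
  rw [key]
  calc (Complex.exp (-(Complex.I * s * m)) * ∫ x in J, Complex.exp (Complex.I * s * f x)).re
      ≤ ‖Complex.exp (-(Complex.I * s * m)) *
          ∫ x in J, Complex.exp (Complex.I * s * f x)‖ := Complex.re_le_norm _
    _ = ‖Complex.exp (-(Complex.I * s * m))‖ *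
          ‖∫ x in J, Complex.exp (Complex.I * s * f x)‖ := norm_mul _ _
    _ = ‖∫ x in J, Complex.exp (Complex.I * s * f x)‖ := by
        rw [Complex.norm_exp]
        simp [hre m]

/-- For a `(ρ,γ)`-irregular function, the set where `f` stays close to its
average on an interval `J` occupies a small fraction of `J`. -/
theorem small_oscillation_set_of_rho_gamma_irregular
    (p : ℝ) (hp : 1 ≤ p) (f : ℝ → ℝ)
    (hf : MemLp f (ENNReal.ofReal p) (volume.restrict (Set.Ioo (0:ℝ) 1)))
    (ρ γ c : ℝ) (hρ0 : 0 < ρ) (hρ1 : ρ ≤ 1) (hγ0 : 0 ≤ γ) (hγ1 : γ < 1)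
    (hc : 0 < c)
    -- `(ρ,γ)`-irregularity: the Fourier transform of the occupation measure of
    -- `f` on any interval `J ⊆ [0,1]` decays like `c |J|^γ (1+|ξ|)^{-ρ}`.
    (hirr : ∀ a b : ℝ, 0 ≤ a → a < b → b ≤ 1 → ∀ ξ : ℝ,
      ‖∫ x in Set.Ioo a b, Complex.exp (Complex.I * ξ * f x)‖ ≤
        c * (b - a) ^ γ * (1 + |ξ|) ^ (-ρ))
    (q : ℝ) (hq : 1 < q * ρ) :
    ∃ C : ℝ, 0 < C ∧ ∀ ε : ℝ, 0 < ε → ∀ a b : ℝ, 0 ≤ a → a < b → b ≤ 1 →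
      (volume { x ∈ Set.Ioo a b |
          |f x - ⨍ y in Set.Ioo a b, f y| ≤
            ε * c ^ (-q) * (b - a) ^ (q * (1 - γ)) }).toReal ≤
        C * ε ^ (1 / q) * (b - a) := by
  have hq1 : 1 < q := by nlinarith
  have hq0 : 0 < q := lt_trans one_pos hq1
  have hiq : 1 / q < ρ := by rw [div_lt_iff₀ hq0]; nlinarith
  have hiq1 : 1 / q < 1 := by rw [div_lt_one hq0]; exact hq1
  have hiq0 : 0 < 1 / q := by positivity
  refine ⟨4 * q / (q - 1), div_pos (by linarith) (by linarith), ?_⟩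
  intro ε hε a b ha hab hb1
  have hL0 : (0:ℝ) < b - a := by linarith
  set m := ⨍ y in Set.Ioo a b, f y with hm
  set δ := ε * c ^ (-q) * (b - a) ^ (q * (1 - γ)) with hδdef
  have hcq : (0:ℝ) < c ^ (-q) := Real.rpow_pos_of_pos hc _
  have hLq : (0:ℝ) < (b - a) ^ (q * (1 - γ)) := Real.rpow_pos_of_pos hL0 _
  have hδ0 : 0 < δ := by rw [hδdef]; positivity
  set J := Set.Ioo a b with hJdef
  have hJmeas : MeasurableSet J := measurableSet_Ioo
  have hJfin : volume J < ⊤ := measure_Ioo_lt_top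
  haveI : Fact (volume J < ⊤) := ⟨hJfin⟩
  haveI : Fact (volume (Set.Ioo (-1:ℝ) 1) < ⊤) := ⟨measure_Ioo_lt_top⟩
  have hfm : AEStronglyMeasurable f (volume.restrict J) :=
    hf.aestronglyMeasurable.mono_measure
      (Measure.restrict_mono (Set.Ioo_subset_Ioo ha hb1) le_rfl)
  set g : ℝ → ℝ := fun x => (f x - m) / δ with hg
  have hgm : AEMeasurable g (volume.restrict J) :=
    (hfm.aemeasurable.sub aemeasurable_const).div aemeasurable_const
  have hhm : AEMeasurable (fun x => fejerK (g x)) (volume.restrict J) :=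
    measurable_fejerK.comp_aemeasurable hgm
  have hhint : Integrable (fun x => fejerK (g x)) (volume.restrict J) := by
    refine Integrable.mono' (integrable_const 2) hhm.aestronglyMeasurable
      (Filter.Eventually.of_forall fun x => ?_)
    rw [Real.norm_eq_abs, abs_of_nonneg (fejerK_nonneg _)]
    exact fejerK_le_two _
  -- Step 1: Chebyshev-type bound via the kernel
  have step1 : (volume {x ∈ J | |f x - m| ≤ δ}).toReal ≤ ∫ x in J, fejerK (g x) := by
    have hsub : volume {x ∈ J | |f x - m| ≤ δ} ≤ ENNReal.ofReal (∫ x in J, fejerK (g x)) := by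
      have h1 : volume {x ∈ J | |f x - m| ≤ δ} = (volume.restrict J) {x ∈ J | |f x - m| ≤ δ} := by
        rw [Measure.restrict_apply' hJmeas]
        congr 1
        ext x
        simp only [Set.mem_inter_iff, Set.mem_setOf_eq]
        tauto
      rw [h1, ofReal_integral_eq_lintegral_ofReal hhint
        (Filter.Eventually.of_forall fun x => fejerK_nonneg _)]
      calc (volume.restrict J) {x ∈ J | |f x - m| ≤ δ}
          ≤ (volume.restrict J) {x | 1 ≤ ENNReal.ofReal (fejerK (g x))} := by
            apply measure_mono
            rintro x ⟨hxJ, hxd⟩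
            have hgx : |g x| ≤ 1 := by
              rw [hg]
              simp only [abs_div, abs_of_pos hδ0]
              exact div_le_one_of_le₀ hxd hδ0.le
            have h2 := one_le_fejerK hgx
            simpa [ENNReal.one_le_ofReal] using h2
        _ ≤ ∫⁻ x, ENNReal.ofReal (fejerK (g x)) ∂(volume.restrict J) := by
            simpa using mul_meas_ge_le_lintegral₀ (hhm.ennreal_ofReal) 1
    exact ENNReal.toReal_le_of_le_ofReal (integral_nonneg fun x => fejerK_nonneg _) hsub
  -- Step 2: Fubini with the Fejér kernel
  set F : ℝ → ℝ → ℝ := fun x ξ => 2 * (1 - |ξ|) * Real.cos (g x * ξ) with hF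
  have hFmeas : AEStronglyMeasurable (Function.uncurry F)
      ((volume.restrict J).prod (volume.restrict (Set.Ioo (-1:ℝ) 1))) := by
    apply AEStronglyMeasurable.mul
    · exact ((by continuity : Continuous fun t : ℝ => 2 * (1 - |t|)).comp
        continuous_snd).aestronglyMeasurable
    · have h1 : AEMeasurable (fun z : ℝ × ℝ => g z.1)
          ((volume.restrict J).prod (volume.restrict (Set.Ioo (-1:ℝ) 1))) :=
        hgm.comp_fst
      have h2 : AEMeasurable (fun z : ℝ × ℝ => g z.1 * z.2)
          ((volume.restrict J).prod (volume.restrict (Set.Ioo (-1:ℝ) 1))) :=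
        h1.mul measurable_snd.aemeasurable
      exact (Real.measurable_cos.comp_aemeasurable h2).aestronglyMeasurable
  have hFint : Integrable (Function.uncurry F)
      ((volume.restrict J).prod (volume.restrict (Set.Ioo (-1:ℝ) 1))) := by
    refine Integrable.mono' (integrable_const 2) hFmeas ?_
    rw [Measure.prod_restrict]
    filter_upwards [ae_restrict_mem (hJmeas.prod measurableSet_Ioo)] with z hz
    have hz2 : |z.2| ≤ 1 := by
      have h := hz.2
      rw [Set.mem_Ioo] at h
      rw [abs_le]
      constructor <;> linarith [h.1, h.2]
    have h1 : |Real.cos (g z.1 * z.2)| ≤ 1 := Real.abs_cos_le_one _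
    have h2 : |2 * (1 - |z.2|)| ≤ 2 := by
      rw [abs_of_nonneg (by linarith [abs_nonneg z.2] : (0:ℝ) ≤ 2 * (1 - |z.2|))]
      linarith [abs_nonneg z.2]
    simp only [Function.uncurry, hF, Real.norm_eq_abs]
    rw [abs_mul]
    calc |2 * (1 - |z.2|)| * |Real.cos (g z.1 * z.2)| ≤ 2 * 1 :=
          mul_le_mul h2 h1 (abs_nonneg _) (by norm_num)
      _ = 2 := by ring
  have step2 : (∫ x in J, fejerK (g x))
      = ∫ ξ in Set.Ioo (-1:ℝ) 1, ∫ x in J, F x ξ := by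
    have h1 : ∀ x, fejerK (g x) = ∫ ξ in Set.Ioo (-1:ℝ) 1, F x ξ :=
      fun x => (fejer_integral (g x)).symm
    simp_rw [h1]
    exact integral_integral_swap hFint
  -- Step 3: bound the frequency integral
  set Cq := c * (b - a) ^ γ * δ ^ (1/q) with hCq
  have hLγ : (0:ℝ) < (b - a) ^ γ := Real.rpow_pos_of_pos hL0 _
  have hδq : (0:ℝ) < δ ^ (1/q) := Real.rpow_pos_of_pos hδ0 _
  have hCq0 : 0 < Cq := by rw [hCq]; positivity
  have inner_bound : ∀ ξ : ℝ, ξ ∈ Set.Icc (-1:ℝ) 1 → ξ ≠ 0 →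
      (∫ x in J, F x ξ) ≤ 2 * Cq * |ξ| ^ (-(1/q)) := by
    intro ξ hξ hξ0
    have hξ1 : |ξ| ≤ 1 := abs_le.mpr ⟨hξ.1, hξ.2⟩
    have hξpos : 0 < |ξ| := abs_pos.mpr hξ0
    have hpull : (∫ x in J, F x ξ)
        = 2 * (1 - |ξ|) * ∫ x in J, Real.cos ((ξ/δ) * (f x - m)) := by
      rw [← integral_const_mul]
      refine integral_congr_ae (Filter.Eventually.of_forall fun x => ?_)
      simp only [hF, hg]
      congr 1
      field_simp
    have hcosle := cos_integral_le_abs J hJfin f hfm (ξ/δ) m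
    have hirrb := hirr a b ha hab hb1 (ξ/δ)
    have habsξ : |ξ/δ| = |ξ|/δ := by rw [abs_div, abs_of_pos hδ0]
    have hch : (1 + |ξ/δ|) ^ (-ρ) ≤ δ ^ (1/q) * |ξ| ^ (-(1/q)) := by
      have h1 : (1 + |ξ/δ|) ^ (-ρ) ≤ (1 + |ξ/δ|) ^ (-(1/q)) :=
        Real.rpow_le_rpow_of_exponent_le (by linarith [abs_nonneg (ξ/δ)]) (by linarith)
      have h2 : (1 + |ξ/δ|) ^ (-(1/q)) ≤ (|ξ|/δ) ^ (-(1/q)) := by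
        refine Real.rpow_le_rpow_of_nonpos (by positivity) ?_ (by linarith)
        rw [← habsξ]
        linarith
      have h3 : (|ξ|/δ) ^ (-(1/q)) = δ ^ (1/q) * |ξ| ^ (-(1/q)) := by
        rw [Real.div_rpow (abs_nonneg _) hδ0.le, Real.rpow_neg hδ0.le]
        field_simp
      rw [← h3]
      exact h1.trans h2
    have hcoef : (0:ℝ) ≤ c * (b - a) ^ γ := by positivity
    have hbase : (∫ x in J, Real.cos ((ξ/δ) * (f x - m))) ≤ Cq * |ξ| ^ (-(1/q)) := by
      calc (∫ x in J, Real.cos ((ξ/δ) * (f x - m)))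
          ≤ ‖∫ x in J, Complex.exp (Complex.I * ((ξ/δ : ℝ) : ℂ) * f x)‖ := hcosle
        _ ≤ c * (b - a) ^ γ * (1 + |ξ/δ|) ^ (-ρ) := hirrb
        _ ≤ c * (b - a) ^ γ * (δ ^ (1/q) * |ξ| ^ (-(1/q))) :=
            mul_le_mul_of_nonneg_left hch hcoef
        _ = Cq * |ξ| ^ (-(1/q)) := by rw [hCq]; ring
    have hξr : (0:ℝ) ≤ |ξ| ^ (-(1/q)) := Real.rpow_nonneg (abs_nonneg _) _
    have hw0 : (0:ℝ) ≤ 2 * (1 - |ξ|) := by linarith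
    calc (∫ x in J, F x ξ) = 2 * (1 - |ξ|) * ∫ x in J, Real.cos ((ξ/δ) * (f x - m)) := hpull
      _ ≤ 2 * (1 - |ξ|) * (Cq * |ξ| ^ (-(1/q))) := mul_le_mul_of_nonneg_left hbase hw0
      _ ≤ 2 * (Cq * |ξ| ^ (-(1/q))) := by
          refine mul_le_mul_of_nonneg_right ?_ (by positivity)
          linarith [abs_nonneg ξ]
      _ = 2 * Cq * |ξ| ^ (-(1/q)) := by ring
  have hFinner_int : IntervalIntegrable (fun ξ => ∫ x in J, F x ξ) volume (-1) 1 := by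
    have h := hFint.integral_prod_right
    rw [intervalIntegrable_iff_integrableOn_Ioc_of_le (by norm_num : (-1:ℝ) ≤ 1)]
    rw [IntegrableOn, ← Measure.restrict_congr_set Ioo_ae_eq_Ioc]
    exact h
  have hr1 : (-1:ℝ) < -(1/q) := by linarith
  have hBint : IntervalIntegrable (fun ξ : ℝ => 2 * Cq * |ξ| ^ (-(1/q))) volume (-1) 1 :=
    (absRpow_intInt hr1).const_mul _
  have step3 : (∫ ξ in Set.Ioo (-1:ℝ) 1, ∫ x in J, F x ξ) ≤ 2 * Cq * (2 / (-(1/q) + 1)) := by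
    rw [← MeasureTheory.integral_Ioc_eq_integral_Ioo,
      ← intervalIntegral.integral_of_le (by norm_num : (-1:ℝ) ≤ 1)]
    have hae : (fun ξ => ∫ x in J, F x ξ) ≤ᵐ[volume.restrict (Set.Icc (-1:ℝ) 1)]
        fun ξ : ℝ => 2 * Cq * |ξ| ^ (-(1/q)) := by
      have h0 : ∀ᵐ ξ : ℝ ∂(volume.restrict (Set.Icc (-1:ℝ) 1)), ξ ≠ 0 := by
        rw [ae_iff]
        refine measure_mono_null (t := {(0:ℝ)}) (fun x hx => ?_) ?_
        · simp only [Set.mem_setOf_eq, not_not] at hx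
          exact hx ▸ Set.mem_singleton _
        · rw [Measure.restrict_apply (measurableSet_singleton 0)]
          exact measure_mono_null Set.inter_subset_left (measure_singleton 0)
      filter_upwards [ae_restrict_mem measurableSet_Icc, h0] with ξ hmem hne
      exact inner_bound ξ hmem hne
    calc (∫ ξ in (-1:ℝ)..1, ∫ x in J, F x ξ)
        ≤ ∫ ξ in (-1:ℝ)..1, 2 * Cq * |ξ| ^ (-(1/q)) :=
          intervalIntegral.integral_mono_ae_restrict (by norm_num : (-1:ℝ) ≤ 1)
            hFinner_int hBint hae
      _ = 2 * Cq * ∫ ξ in (-1:ℝ)..1, |ξ| ^ (-(1/q)) := intervalIntegral.integral_const_mul _ _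
      _ = 2 * Cq * (2 / (-(1/q) + 1)) := by rw [absRpow_integral hr1]
  -- Step 4: arithmetic
  have hδpow : δ ^ (1/q) = ε ^ (1/q) * c⁻¹ * (b - a) ^ (1 - γ) := by
    rw [hδdef, Real.mul_rpow (by positivity) hLq.le, Real.mul_rpow hε.le hcq.le]
    congr 1
    · congr 1
      rw [← Real.rpow_mul hc.le]
      rw [show -q * (1/q) = -1 by field_simp, Real.rpow_neg_one]
    · rw [← Real.rpow_mul hL0.le]
      congr 1
      field_simp
  have hfinal : 2 * Cq * (2 / (-(1/q) + 1)) = 4 * q / (q - 1) * ε ^ (1 / q) * (b - a) := by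
    have hLg : (b - a) ^ γ * (b - a) ^ (1 - γ) = b - a := by
      rw [← Real.rpow_add hL0]
      norm_num
    rw [hCq, hδpow]
    have hc' : c * c⁻¹ = 1 := mul_inv_cancel₀ hc.ne'
    have hden : -(1/q) + 1 = (q - 1)/q := by field_simp; ring
    rw [hden]
    rw [show c * (b - a) ^ γ * (ε ^ (1/q) * c⁻¹ * (b - a) ^ (1 - γ))
        = (c * c⁻¹) * ((b - a) ^ γ * (b - a) ^ (1 - γ)) * ε ^ (1/q) by ring,
      hc', hLg, one_mul]
    rw [div_div_eq_mul_div]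
    field_simp
    ring
  calc (volume {x ∈ J | |f x - m| ≤ δ}).toReal
      ≤ ∫ x in J, fejerK (g x) := step1
    _ = ∫ ξ in Set.Ioo (-1:ℝ) 1, ∫ x in J, F x ξ := step2
    _ ≤ 2 * Cq * (2 / (-(1/q) + 1)) := step3
    _ = 4 * q / (q - 1) * ε ^ (1 / q) * (b - a) := hfinal
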